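/- Let A ∈ ℝ^{q×q} and C ∈ ℝ^{p×q}. The pair {A, C} is detectable (i.e. there exists K ∈ ℝ^{q×p} such that every complex eigenvalue of A − K·C has modulus strictly less than 1) if and only if there exists no pair (λ, x) with λ ∈ ℂ, x ∈ ℂ^q, x ≠ 0, such that A·x = λ·x (for the complexification of A), |λ| ≥ 1, and C·x = 0 (for the complexification of C). -/

import Mathlib

open Matrix

section PBHAux
open Submodule Set

variable {V : Type} [AddCommGroup V] [Module ℝ V] [FiniteDimensional ℝ V]
  {U : Type} [AddCommGroup U] [Module ℝ U]

/-- auxiliary: greedy construction of a controllability chain -/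
theorem chain_exists (a : V →ₗ[ℝ] V) (bm : U →ₗ[ℝ] V)
    (hctrl : (⨆ k : ℕ, LinearMap.range ((a ^ k) ∘ₗ bm)) = ⊤)
    (k : ℕ) (hk : k ≤ Module.finrank ℝ V) :
    ∃ (x : ℕ → V) (u : ℕ → U),
      (∀ i < k, x i = a (if i = 0 then 0 else x (i - 1)) + bm (u i)) ∧
      LinearIndependent ℝ (fun j : Fin k => x j) := by
  induction k with
  | zero =>
    exact ⟨0, 0, fun i hi => absurd hi (Nat.not_lt_zero i), linearIndependent_empty_type⟩
  | succ k ih =>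
    obtain ⟨x, u, hrel, hli⟩ := ih (le_of_lt (Nat.lt_of_succ_le hk))
    set S : Submodule ℝ V := span ℝ (Set.range fun j : Fin k => x j) with hS
    -- the previous chain value
    set pre : V := if k = 0 then 0 else x (k - 1) with hpre
    have key : ∃ u' : U, a pre + bm u' ∉ S := by
      by_contra hall
      push_neg at hall
      have hapre : a pre ∈ S := by simpa using hall 0
      have hB : LinearMap.range bm ≤ S := by
        rintro w ⟨u0, rfl⟩
        have hw : bm u0 = (a pre + bm u0) - a pre := (add_sub_cancel_left _ _).symm
        rw [hw]
        exact sub_mem (hall u0) hapre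
      have hA : ∀ s ∈ S, a s ∈ S := by
        intro s hs
        have : S ≤ Submodule.comap a S := by
          rw [hS, span_le]
          rintro w ⟨j, rfl⟩
          simp only [SetLike.mem_coe, Submodule.mem_comap]
          rcases Nat.lt_or_ge ((j : ℕ) + 1) k with hj | hj
          · have hx := hrel ((j : ℕ) + 1) hj
            simp only [Nat.succ_ne_zero, if_false, Nat.add_sub_cancel] at hx
            have : a (x j) = x ((j : ℕ) + 1) - bm (u ((j : ℕ) + 1)) := by
              rw [hx]; abel
            rw [this]
            refine sub_mem ?_ (hB ⟨_, rfl⟩)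
            exact subset_span ⟨⟨(j : ℕ) + 1, hj⟩, rfl⟩
          · have hjk : (j : ℕ) = k - 1 := by omega
            have hk0 : k ≠ 0 := by omega
            have : a (x j) = a pre := by rw [hpre, if_neg hk0, hjk]
            rw [this]; exact hapre
        exact this hs
      have hrange : ∀ m : ℕ, LinearMap.range ((a ^ m) ∘ₗ bm) ≤ S := by
        intro m
        induction m with
        | zero => simpa [Module.End.one_eq_id] using hB
        | succ m ihm =>
          rw [pow_succ', Module.End.mul_eq_comp, LinearMap.comp_assoc, LinearMap.range_comp]
          refine (Submodule.map_mono ihm).trans ?_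
          rw [Submodule.map_le_iff_le_comap]
          intro s hs; exact hA s hs
      have htop : S = ⊤ := top_unique (hctrl ▸ iSup_le hrange)
      have h1 : Module.finrank ℝ S ≤ k := by
        rw [hS]
        simpa [Set.finrank] using finrank_range_le_card (R := ℝ) (fun j : Fin k => x j)
      rw [htop, finrank_top] at h1
      omega
    obtain ⟨u', hu'⟩ := key
    refine ⟨Function.update x k (a pre + bm u'), Function.update u k u', ?_, ?_⟩
    · intro i hi
      rcases Nat.lt_or_ge i k with hik | hik
      · have h1 : i ≠ k := by omega
        have h2 : i - 1 ≠ k := by omega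
        rw [Function.update_of_ne h1, Function.update_of_ne h1, Function.update_of_ne h2]
        exact hrel i hik
      · have hik' : i = k := by omega
        rw [hik', Function.update_self, Function.update_self]
        congr 2
        by_cases h0 : k = 0
        · rw [hpre, if_pos h0, if_pos h0]
        · rw [hpre, if_neg h0, if_neg h0, Function.update_of_ne (by omega)]
    · have heq : (fun j : Fin (k + 1) => Function.update x k (a pre + bm u') j) =
          Fin.snoc (fun j : Fin k => x j) (a pre + bm u') := by
        funext j
        refine Fin.lastCases ?_ (fun i => ?_) j
        · simp [Fin.snoc_last, Fin.val_last]
        · rw [Fin.snoc_castSucc]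
          simp only [Fin.coe_castSucc]
          exact Function.update_of_ne (by omega) _ _
      rw [heq, linearIndependent_fin_snoc]
      exact ⟨hli, hu'⟩

open Polynomial in
theorem deadbeat (a : V →ₗ[ℝ] V) (bm : U →ₗ[ℝ] V)
    (hctrl : (⨆ k : ℕ, LinearMap.range ((a ^ k) ∘ₗ bm)) = ⊤) :
    ∃ f : V →ₗ[ℝ] U, ((a + bm ∘ₗ f) ^ (Module.finrank ℝ V)) = 0 := by
  rcases Nat.eq_zero_or_pos (Module.finrank ℝ V) with h0 | hpos
  · have : Subsingleton V := by
      have := Module.finrank_zero_iff (R := ℝ) (M := V)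
      exact this.mp h0
    exact ⟨0, Subsingleton.elim _ _⟩
  obtain ⟨n, hn⟩ : ∃ n, Module.finrank ℝ V = n := ⟨_, rfl⟩
  rw [hn]
  have hpos' : 0 < n := hn ▸ hpos
  obtain ⟨x, u, hrel, hli⟩ := chain_exists a bm hctrl n hn.ge
  have hne : Nonempty (Fin n) := ⟨⟨0, hpos'⟩⟩
  have hcard : Fintype.card (Fin n) = Module.finrank ℝ V := by simp [hn]
  let xb : Module.Basis (Fin n) ℝ V := basisOfLinearIndependentOfCardEqFinrank hli hcard
  have hxb : ∀ j : Fin n, xb j = x j := fun j => by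
    rw [coe_basisOfLinearIndependentOfCardEqFinrank]
  let f0 : V →ₗ[ℝ] U :=
    xb.constr ℝ (fun i : Fin n => if (i : ℕ) + 1 < n then u ((i : ℕ) + 1) else 0)
  set M : V →ₗ[ℝ] V := a + bm ∘ₗ f0 with hM
  set b : V := x 0 with hb
  have hb0 : b = bm (u 0) := by
    have := hrel 0 hpos'
    simpa using this
  have hstep : ∀ i : ℕ, i + 1 < n → M (x i) = x (i + 1) := by
    intro i hi
    have h1 : f0 (x i) = u (i + 1) := by
      have hi' : i < n := by omega
      rw [← hxb ⟨i, hi'⟩]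
      rw [show f0 = xb.constr ℝ (fun i : Fin n => if (i : ℕ) + 1 < n then u ((i : ℕ) + 1) else 0) from rfl]
      rw [Module.Basis.constr_basis]
      simp only [if_pos hi]
    have h2 := hrel (i + 1) hi
    simp only [Nat.succ_ne_zero, if_false, Nat.add_sub_cancel] at h2
    rw [hM]
    simp only [LinearMap.add_apply, LinearMap.comp_apply, h1]
    rw [h2]
  have hMpow : ∀ i : ℕ, i < n → (M ^ i) b = x i := by
    intro i
    induction i with
    | zero => intro _; simp [hb]
    | succ i ih =>
      intro hi
      rw [pow_succ', Module.End.mul_apply, ih (by omega), hstep i hi]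
  -- Cayley-Hamilton part
  set χ := M.charpoly with hχ
  have hmonic : χ.Monic := M.charpoly_monic
  have hdeg : χ.natDegree = n := (M.charpoly_natDegree).trans hn
  set w : ℕ → V := fun k => Polynomial.aeval M (Polynomial.divX^[k] χ) b with hw
  have hcoeff : ∀ k j : ℕ, (Polynomial.divX^[k] χ).coeff j = χ.coeff (j + k) := by
    intro k
    induction k with
    | zero => intro j; simp
    | succ k ih =>
      intro j
      rw [Function.iterate_succ_apply', Polynomial.coeff_divX, ih (j + 1)]
      congr 1
      omega
  have hdegk : ∀ k : ℕ, (Polynomial.divX^[k] χ).natDegree ≤ n - k := by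
    intro k
    rw [Polynomial.natDegree_le_iff_coeff_eq_zero]
    intro m hm
    rw [hcoeff k m]
    exact Polynomial.coeff_eq_zero_of_natDegree_lt (by omega)
  have hwrel : ∀ k : ℕ, w k = M (w (k + 1)) + χ.coeff k • b := by
    intro k
    have hsplit : (Polynomial.divX^[k] χ) =
        Polynomial.X * (Polynomial.divX^[k+1] χ) + Polynomial.C (χ.coeff k) := by
      rw [Function.iterate_succ_apply']
      conv_lhs => rw [← Polynomial.X_mul_divX_add (Polynomial.divX^[k] χ)]
      congr 2
      simp [hcoeff k 0]
    rw [hw]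
    simp only []
    rw [hsplit, map_add, _root_.map_mul, Polynomial.aeval_X, Polynomial.aeval_C]
    simp [Algebra.algebraMap_eq_smul_one]
  have hw0 : w 0 = 0 := by
    rw [hw]
    simp only [Function.iterate_zero, id_eq]
    rw [hχ]
    rw [LinearMap.aeval_self_charpoly]
    simp
  have hwn : w n = b := by
    have hPn : (Polynomial.divX^[n] χ) = 1 := by
      ext j
      rw [hcoeff n j, Polynomial.coeff_one]
      rcases Nat.eq_zero_or_pos j with rfl | hj
      · simp only [Nat.zero_add, if_pos rfl]
        rw [← hdeg]
        exact hmonic.coeff_natDegree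
      · rw [if_neg (by omega)]
        exact Polynomial.coeff_eq_zero_of_natDegree_lt (by omega)
    rw [hw]
    simp only []
    rw [hPn, _root_.map_one, Module.End.one_apply]
  have hwx : ∀ m : ℕ, m < n → w (n - m) =
      x m + ∑ j ∈ Finset.range m, χ.coeff (n - m + j) • x j := by
    intro m hm
    have hdlt : (Polynomial.divX^[n - m] χ).natDegree < m + 1 := by
      have := hdegk (n - m)
      omega
    rw [hw]
    simp only []
    rw [Polynomial.aeval_eq_sum_range' hdlt]
    rw [LinearMap.sum_apply]
    rw [Finset.sum_range_succ]
    have hterm : ∀ j ∈ Finset.range m,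
        ((Polynomial.divX^[n - m] χ).coeff j • M ^ j) b = χ.coeff (n - m + j) • x j := by
      intro j hj
      rw [Finset.mem_range] at hj
      rw [LinearMap.smul_apply, hMpow j (by omega), hcoeff]
      congr 2
      omega
    rw [Finset.sum_congr rfl hterm]
    rw [LinearMap.smul_apply, hMpow m hm, hcoeff]
    have : m + (n - m) = n := by omega
    rw [this, ← hdeg, hmonic.coeff_natDegree, one_smul]
    abel
  set z : Fin n → V := fun i => w ((i : ℕ) + 1) with hz
  have hspan : ∀ m : ℕ, m < n → x m ∈ span ℝ (Set.range z) := by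
    intro m
    induction m using Nat.strong_induction_on with
    | _ m ih =>
      intro hm
      have hxm : x m = w (n - m) - ∑ j ∈ Finset.range m, χ.coeff (n - m + j) • x j := by
        rw [hwx m hm]; abel
      rw [hxm]
      refine sub_mem ?_ (Submodule.sum_mem _ fun j hj => ?_)
      · have : w (n - m) = z ⟨n - m - 1, by omega⟩ := by
          rw [hz]
          simp only []
          congr 1
          omega
        rw [this]
        exact subset_span ⟨_, rfl⟩
      · rw [Finset.mem_range] at hj
        exact Submodule.smul_mem _ _ (ih j (by omega) (by omega))
  have htop : ⊤ ≤ span ℝ (Set.range z) := by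
    rw [← xb.span_eq]
    rw [show ⇑xb = fun j : Fin n => x j from funext hxb]
    rw [span_le]
    rintro v ⟨j, rfl⟩
    exact hspan j j.isLt
  let zb : Module.Basis (Fin n) ℝ V := basisOfTopLeSpanOfCardEqFinrank z htop hcard
  have hzb : ∀ i : Fin n, zb i = z i := fun i => by
    rw [coe_basisOfTopLeSpanOfCardEqFinrank]
  let f1 : V →ₗ[ℝ] U := zb.constr ℝ (fun i : Fin n => χ.coeff (i : ℕ) • u 0)
  set M' : V →ₗ[ℝ] V := M + bm ∘ₗ f1 with hM'
  have hM'z : ∀ i : Fin n, M' (z i) = w (i : ℕ) := by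
    intro i
    have h1 : f1 (z i) = χ.coeff (i : ℕ) • u 0 := by
      rw [← hzb i]
      rw [show f1 = zb.constr ℝ (fun i : Fin n => χ.coeff (i : ℕ) • u 0) from rfl]
      rw [Module.Basis.constr_basis]
    rw [hM']
    simp only [LinearMap.add_apply, LinearMap.comp_apply, h1, _root_.map_smul]
    rw [← hb0, hwrel (i : ℕ)]
  have hnil : ∀ k : ℕ, ∀ i : Fin n, (i : ℕ) = k → (M' ^ ((i : ℕ) + 1)) (z i) = 0 := by
    intro k
    induction k with
    | zero =>
      intro i hi
      rw [hi, pow_one, hM'z i, hi, hw0]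
    | succ k ih =>
      intro i hi
      have hkn : k < n := by omega
      rw [hi, pow_succ, Module.End.mul_apply, hM'z i, hi]
      have : w (k + 1) = z ⟨k, hkn⟩ := rfl
      rw [this]
      have := ih ⟨k, hkn⟩ rfl
      simpa using this
  refine ⟨f0 + f1, ?_⟩
  have hMM' : a + bm ∘ₗ (f0 + f1) = M' := by
    rw [hM', hM]
    rw [LinearMap.comp_add]
    abel
  rw [hMM']
  refine zb.ext fun i => ?_
  rw [hzb i]
  have hsplit : n = (n - ((i : ℕ) + 1)) + ((i : ℕ) + 1) := by omega
  rw [hsplit, pow_add, Module.End.mul_apply, hnil (i : ℕ) i rfl, map_zero]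
  simp

theorem spec_iff' {q : ℕ} (M : Matrix (Fin q) (Fin q) ℂ) (z : ℂ) :
    z ∈ spectrum ℂ M ↔ ∃ x : Fin q → ℂ, x ≠ 0 ∧ M.mulVec x = z • x := by
  rw [spectrum.mem_iff, Matrix.isUnit_iff_isUnit_det, isUnit_iff_ne_zero, not_not,
      ← Matrix.exists_mulVec_eq_zero_iff]
  have hmv : ∀ v : Fin q → ℂ,
      (algebraMap ℂ (Matrix (Fin q) (Fin q) ℂ) z - M).mulVec v = z • v - M.mulVec v := by
    intro v
    rw [Matrix.sub_mulVec, Algebra.algebraMap_eq_smul_one, Matrix.smul_mulVec,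
      Matrix.one_mulVec]
  constructor
  · rintro ⟨v, hv, hMv⟩
    refine ⟨v, hv, ?_⟩
    rw [hmv v] at hMv
    rw [← sub_eq_zero]
    rw [← neg_eq_zero, neg_sub]
    exact hMv
  · rintro ⟨v, hv, hMv⟩
    refine ⟨v, hv, ?_⟩
    rw [hmv v, hMv, sub_self]

end PBHAux

/-- scalar-free (PBH-type) test for detectability: the pair `{A, C}` is
detectable iff there is no eigenpair `(λ, x)`, `x ≠ 0`, of the complexification of `A`
with `|λ| ≥ 1` and `C·x = 0`. -/
theorem stmt_18 (q p : ℕ) (A : Matrix (Fin q) (Fin q) ℝ) (C : Matrix (Fin p) (Fin q) ℝ) :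
    (∃ K : Matrix (Fin q) (Fin p) ℝ,
      ∀ z ∈ spectrum ℂ ((A - K * C).map (Complex.ofReal : ℝ → ℂ)),
        ‖z‖ < 1) ↔
    ¬ ∃ (lam : ℂ) (x : Fin q → ℂ), x ≠ 0 ∧
      (A.map (Complex.ofReal : ℝ → ℂ)).mulVec x = lam • x ∧
      1 ≤ ‖lam‖ ∧
      (C.map (Complex.ofReal : ℝ → ℂ)).mulVec x = 0 := by
  have hmapC : ∀ (m n : ℕ) (M : Matrix (Fin m) (Fin n) ℝ),
      M.map (Complex.ofReal : ℝ → ℂ) = M.map (Complex.ofRealHom : ℝ →+* ℂ) := fun _ _ _ => rfl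
  constructor
  · rintro ⟨K, hK⟩ ⟨lam, x, hx0, hAx, hlam, hCx⟩
    have hmem : lam ∈ spectrum ℂ ((A - K * C).map (Complex.ofReal : ℝ → ℂ)) := by
      rw [spec_iff']
      refine ⟨x, hx0, ?_⟩
      have hmap : (A - K * C).map (Complex.ofReal : ℝ → ℂ)
          = A.map (Complex.ofReal : ℝ → ℂ)
            - K.map (Complex.ofReal : ℝ → ℂ) * C.map (Complex.ofReal : ℝ → ℂ) := by
        have h1 := map_sub (Complex.ofRealHom.mapMatrix (m := Fin q))
          A (K * C)
        simp only [RingHom.mapMatrix_apply] at h1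
        rw [hmapC, h1]
        congr 1
        exact Matrix.map_mul
      rw [hmap, Matrix.sub_mulVec, ← Matrix.mulVec_mulVec, hCx, Matrix.mulVec_zero,
        sub_zero, hAx]
    exact absurd hlam (not_le.mpr (hK lam hmem))
  · intro hnp
    classical
    -- the observable subspace of the transposed pair
    let mt : (Fin q → ℝ) →ₗ[ℝ] (Fin q → ℝ) := Matrix.mulVecLin Aᵀ
    let cm : (Fin p → ℝ) →ₗ[ℝ] (Fin q → ℝ) := Matrix.mulVecLin Cᵀ
    let W : Submodule ℝ (Fin q → ℝ) := ⨆ k : ℕ, LinearMap.range ((mt ^ k) ∘ₗ cm)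
    have hWinv : ∀ v ∈ W, mt v ∈ W := by
      intro v hv
      have hle : Submodule.map mt W ≤ W := by
        rw [Submodule.map_iSup]
        refine iSup_le fun k => ?_
        rw [← LinearMap.range_comp]
        have he : mt ∘ₗ ((mt ^ k) ∘ₗ cm) = (mt ^ (k + 1)) ∘ₗ cm := by
          rw [← LinearMap.comp_assoc, ← Module.End.mul_eq_comp, ← pow_succ']
        rw [he]
        exact le_iSup (fun k => LinearMap.range ((mt ^ k) ∘ₗ cm)) (k + 1)
      exact hle ⟨v, hv, rfl⟩
    have hcmW : ∀ u, cm u ∈ W := by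
      intro u
      have := le_iSup (fun k => LinearMap.range ((mt ^ k) ∘ₗ cm)) 0
      refine this ⟨u, ?_⟩
      simp [pow_zero]
    let a' : W →ₗ[ℝ] W := mt.restrict hWinv
    let b' : (Fin p → ℝ) →ₗ[ℝ] W := cm.codRestrict W hcmW
    have hsub_a : ∀ (k : ℕ) (w : W), (((a' ^ k) w : W) : Fin q → ℝ) = (mt ^ k) (w : Fin q → ℝ) := by
      intro k
      induction k with
      | zero => intro w; simp
      | succ k ih =>
        intro w
        rw [pow_succ, Module.End.mul_apply, pow_succ, Module.End.mul_apply]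
        rw [ih (a' w)]
        rfl
    have hcomp : ∀ k : ℕ, W.subtype ∘ₗ ((a' ^ k) ∘ₗ b') = (mt ^ k) ∘ₗ cm := by
      intro k
      apply LinearMap.ext
      intro u
      simp only [LinearMap.comp_apply, Submodule.subtype_apply]
      rw [hsub_a k (b' u)]
      rfl
    have hctrl : (⨆ k : ℕ, LinearMap.range ((a' ^ k) ∘ₗ b')) = ⊤ := by
      apply Submodule.map_injective_of_injective W.injective_subtype
      rw [Submodule.map_iSup]
      have h1 : ∀ k : ℕ, Submodule.map W.subtype (LinearMap.range ((a' ^ k) ∘ₗ b'))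
          = LinearMap.range ((mt ^ k) ∘ₗ cm) := by
        intro k
        rw [← LinearMap.range_comp, hcomp k]
      rw [iSup_congr h1, Submodule.map_top, Submodule.range_subtype]
    obtain ⟨f, hf⟩ := deadbeat a' b' hctrl
    set r := Module.finrank ℝ W with hr
    obtain ⟨π, hπ⟩ := W.subtype.exists_leftInverse_of_injective W.ker_subtype
    let fh : (Fin q → ℝ) →ₗ[ℝ] (Fin p → ℝ) := f ∘ₗ π
    let Fm : Matrix (Fin p) (Fin q) ℝ := LinearMap.toMatrix' fh
    refine ⟨-Fmᵀ, ?_⟩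
    set K : Matrix (Fin q) (Fin p) ℝ := -Fmᵀ with hKdef
    set Mt : Matrix (Fin q) (Fin q) ℝ := Aᵀ + Cᵀ * Fm with hMt
    have htr : (A - K * C)ᵀ = Mt := by
      rw [hMt, hKdef, Matrix.transpose_sub, Matrix.transpose_mul, Matrix.transpose_neg,
        Matrix.transpose_transpose]
      rw [Matrix.mul_neg, sub_neg_eq_add]
    have hFm : ∀ v : Fin q → ℝ, Fm.mulVec v = fh v := by
      intro v
      rw [show Fm = LinearMap.toMatrix' fh from rfl, ← Matrix.toLin'_apply,
        Matrix.toLin'_toMatrix']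
    have hπw : ∀ w : W, π (w : Fin q → ℝ) = w := by
      intro w
      have := LinearMap.ext_iff.mp hπ w
      simpa using this
    have hstep : ∀ w : W, Mt.mulVec (w : Fin q → ℝ) = (((a' + b' ∘ₗ f) w : W) : Fin q → ℝ) := by
      intro w
      rw [hMt, Matrix.add_mulVec, ← Matrix.mulVec_mulVec, hFm]
      have h4 : fh (w : Fin q → ℝ) = f w := by
        show f (π (w : Fin q → ℝ)) = f w
        rw [hπw w]
      rw [h4]
      rfl
    have hpowW : ∀ (k : ℕ) (w : W),
        (Mt ^ k).mulVec (w : Fin q → ℝ) = ((((a' + b' ∘ₗ f) ^ k) w : W) : Fin q → ℝ) := by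
      intro k
      induction k with
      | zero => intro w; simp
      | succ k ih =>
        intro w
        rw [pow_succ', ← Matrix.mulVec_mulVec, ih w, pow_succ', Module.End.mul_apply,
          hstep (((a' + b' ∘ₗ f) ^ k) w)]
    have hkeyT : Mt ^ r * Cᵀ = 0 := by
      have hmv : ∀ v : Fin p → ℝ, (Mt ^ r * Cᵀ).mulVec v = 0 := by
        intro v
        rw [← Matrix.mulVec_mulVec]
        have : Cᵀ.mulVec v = ((b' v : W) : Fin q → ℝ) := rfl
        rw [this, hpowW r (b' v), hf]
        simp
      have : Matrix.toLin' (Mt ^ r * Cᵀ) = Matrix.toLin' (0 : Matrix (Fin q) (Fin p) ℝ) := by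
        apply LinearMap.ext
        intro v
        rw [Matrix.toLin'_apply, Matrix.toLin'_apply, hmv v, Matrix.zero_mulVec]
      exact Matrix.toLin'.injective this
    have hkey : C * (A - K * C) ^ r = 0 := by
      have h1 : (Mt ^ r * Cᵀ)ᵀ = C * ((A - K * C)) ^ r := by
        rw [Matrix.transpose_mul, Matrix.transpose_transpose, ← htr,
          ← Matrix.transpose_pow, Matrix.transpose_transpose]
      rw [← h1, hkeyT, Matrix.transpose_zero]
    -- now the spectral argument over ℂ
    intro z hz
    rw [spec_iff'] at hz
    obtain ⟨x, hx0, hzx⟩ := hz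
    by_contra hlt
    push_neg at hlt
    have hz0 : z ≠ 0 := by
      simpa using norm_pos_iff.mp (zero_lt_one.trans_le hlt)
    set M' : Matrix (Fin q) (Fin q) ℂ := (A - K * C).map (Complex.ofReal : ℝ → ℂ) with hM'
    have hpow : ∀ k : ℕ, (M' ^ k).mulVec x = (z ^ k) • x := by
      intro k
      induction k with
      | zero => simp
      | succ k ih =>
        rw [pow_succ', ← Matrix.mulVec_mulVec, ih, Matrix.mulVec_smul, hzx, pow_succ']
        rw [smul_smul, mul_comm]
    have hCmap : (C.map (Complex.ofReal : ℝ → ℂ)) * M' ^ r = 0 := by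
      have h2 : ((C * (A - K * C) ^ r).map (Complex.ofRealHom : ℝ →+* ℂ))
          = C.map (Complex.ofRealHom : ℝ →+* ℂ)
            * ((A - K * C).map (Complex.ofRealHom : ℝ →+* ℂ)) ^ r := by
        rw [Matrix.map_mul]
        congr 1
        have := map_pow (Complex.ofRealHom.mapMatrix (m := Fin q)) (A - K * C) r
        simp only [RingHom.mapMatrix_apply] at this
        exact this
      rw [hmapC, hM', hmapC, ← h2, hkey]
      simp [Matrix.map_zero]
    have hCx : (C.map (Complex.ofReal : ℝ → ℂ)).mulVec x = 0 := by
      have h3 : (C.map (Complex.ofReal : ℝ → ℂ)).mulVec ((M' ^ r).mulVec x) = 0 := by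
        rw [Matrix.mulVec_mulVec, hCmap, Matrix.zero_mulVec]
      rw [hpow r, Matrix.mulVec_smul] at h3
      have hzr : (z ^ r) ≠ 0 := pow_ne_zero _ hz0
      exact (smul_eq_zero.mp h3).resolve_left hzr
    have hAx : (A.map (Complex.ofReal : ℝ → ℂ)).mulVec x = z • x := by
      have hmap : M' = A.map (Complex.ofReal : ℝ → ℂ)
          - K.map (Complex.ofReal : ℝ → ℂ) * C.map (Complex.ofReal : ℝ → ℂ) := by
        have h1 := map_sub (Complex.ofRealHom.mapMatrix (m := Fin q)) A (K * C)
        simp only [RingHom.mapMatrix_apply] at h1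
        rw [hM', hmapC, h1]
        congr 1
        exact Matrix.map_mul
      have := hzx
      rw [hmap, Matrix.sub_mulVec, ← Matrix.mulVec_mulVec, hCx, Matrix.mulVec_zero,
        sub_zero] at this
      exact this
    exact hnp ⟨z, x, hx0, hAx, hlt, hCx⟩
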